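/- Let G be a connected finite simple graph on n vertices that admits a canonical representation. Then its canonical sequence is unique up to reversal: for any two canonical representations of G, with canonical sequences S, S' : {1, …, 2n} → {1, …, n}, either S'(k) = S(k) for all k, or S'(k) = n + 1 − S(2n + 1 − k) for all k. -/

import Mathlib

open Set

/-- `S : Fin (2*n) → Fin n` is the canonical sequence of the canonical interval
representation with left endpoints `a` and right endpoints `b`. -/
def IsCanonSeq {n : ℕ} (a b : Fin n → ℝ) (S : Fin (2 * n) → Fin n) : Prop :=
  ∃ val : Fin (2 * n) → ℝ, StrictMono val ∧
    Set.range val = Set.range a ∪ Set.range b ∧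
    ∀ k, a (S k) = val k ∨ b (S k) = val k

namespace Stmt3Aux

structure GRep {V : Type*} (G : SimpleGraph V) (n : ℕ) where
  e : Fin n ≃ V
  a : Fin n → ℝ
  b : Fin n → ℝ
  hab : ∀ i, a i ≤ b i
  ha : StrictMono a
  hb : StrictMono b
  hne : ∀ i j, a i ≠ b j
  hAdj : ∀ i j, i ≠ j →
    (G.Adj (e i) (e j) ↔ (Icc (a i) (b i) ∩ Icc (a j) (b j)).Nonempty)

variable {V : Type*} {G : SimpleGraph V} {n : ℕ}

lemma GRep.ab_lt (R : GRep G n) (i : Fin n) : R.a i < R.b i :=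
  lt_of_le_of_ne (R.hab i) (R.hne i i)

lemma GRep.adj_iff (R : GRep G n) {i j : Fin n} (hij : i ≠ j) :
    G.Adj (R.e i) (R.e j) ↔ (R.a j < R.b i ∧ R.a i < R.b j) := by
  rw [R.hAdj i j hij]
  constructor
  · rintro ⟨x, ⟨h1, h2⟩, ⟨h3, h4⟩⟩
    exact ⟨lt_of_le_of_ne (h3.trans h2) (R.hne j i), lt_of_le_of_ne (h1.trans h4) (R.hne i j)⟩
  · rintro ⟨h1, h2⟩
    exact ⟨max (R.a i) (R.a j), ⟨⟨le_max_left _ _, max_le (R.hab i) h1.le⟩,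
      ⟨le_max_right _ _, max_le h2.le (R.hab j)⟩⟩⟩

lemma GRep.umbrella (R : GRep G n) {i j k : Fin n} (h1 : i < j) (h2 : j < k)
    (hik : G.Adj (R.e i) (R.e k)) :
    G.Adj (R.e i) (R.e j) ∧ G.Adj (R.e j) (R.e k) := by
  rw [R.adj_iff (h1.trans h2).ne] at hik
  obtain ⟨hk, hi⟩ := hik
  constructor
  · rw [R.adj_iff h1.ne]
    exact ⟨(R.ha h2).trans hk, (R.ha h1).trans_le (R.hab j)⟩
  · rw [R.adj_iff h2.ne]
    exact ⟨hk.trans (R.hb h1), (R.ha h2).trans_le (R.hab k)⟩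

lemma reach_mem {X : Set V} (h : ∀ x y, G.Adj x y → (x ∈ X ↔ y ∈ X)) {u v : V}
    (hr : G.Reachable u v) (hu : u ∈ X) : v ∈ X := by
  obtain ⟨w⟩ := hr
  induction w with
  | nil => exact hu
  | cons hadj _ ih => exact ih ((h _ _ hadj).1 hu)

lemma GRep.consec (R : GRep G n) (hconn : G.Connected) {i j : Fin n}
    (hij : (i : ℕ) + 1 = (j : ℕ)) : G.Adj (R.e i) (R.e j) := by
  have hlt : i < j := by rw [Fin.lt_def]; omega
  rw [R.adj_iff hlt.ne]
  refine ⟨?_, (R.ha hlt).trans_le (R.hab j)⟩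
  by_contra hc
  have hba : R.b i < R.a j := lt_of_le_of_ne (not_lt.1 hc) fun h => R.hne j i h.symm
  -- cut argument
  set X : Set V := {v | (R.e.symm v : Fin n) ≤ i} with hX
  have hinv : ∀ x y, G.Adj x y → (x ∈ X ↔ y ∈ X) := by
    intro x y hxy
    set k := R.e.symm x with hk
    set l := R.e.symm y with hl
    have hxk : x = R.e k := by simp [hk]
    have hyl : y = R.e l := by simp [hl]
    have hkl : k ≠ l := by
      intro h; rw [hxk, hyl, h] at hxy; exact G.loopless.irrefl _ hxy
    have key : ∀ s t : Fin n, s < t → G.Adj (R.e s) (R.e t) → (s ≤ i ↔ t ≤ i) := by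
      intro s t hst hadj
      rw [R.adj_iff hst.ne] at hadj
      constructor
      · intro hsi
        by_contra hti
        have hti' : j ≤ t := by rw [Fin.le_def]; omega
        have : R.a t < R.b i := hadj.1.trans_le (R.hb.monotone hsi)
        have : R.a j ≤ R.a t := R.ha.monotone hti'
        linarith
      · intro hti
        exact le_trans hst.le hti
    rcases lt_trichotomy k l with h | h | h
    · rw [hxk, hyl, hX]; simpa using key k l h (by rwa [← hxk, ← hyl])
    · exact absurd h hkl
    · rw [hxk, hyl, hX]
      simpa using (key l k h (by rw [← hxk, ← hyl]; exact hxy.symm)).symm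
  have h1 : R.e i ∈ X := by simp [hX]
  have h2 : R.e j ∈ X := reach_mem hinv (hconn.preconnected (R.e i) (R.e j)) h1
  rw [hX] at h2
  simp only [Set.mem_setOf_eq, Equiv.symm_apply_apply] at h2
  rw [Fin.le_def] at h2; omega


/-- true-twin relation (equal closed neighborhoods). -/
def Tw (G : SimpleGraph V) (u v : V) : Prop :=
  ∀ w, (G.Adj u w ∨ w = u) ↔ (G.Adj v w ∨ w = v)

lemma Tw.refl (u : V) : Tw G u u := fun _ => Iff.rfl

lemma Tw.symm {u v : V} (h : Tw G u v) : Tw G v u := fun w => (h w).symm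

lemma Tw.trans {u v w : V} (h : Tw G u v) (h2 : Tw G v w) : Tw G u w :=
  fun x => (h x).trans (h2 x)

lemma Tw.adj {u v : V} (h : Tw G u v) (huv : u ≠ v) : G.Adj u v := by
  have := (h v).2 (Or.inr rfl)
  rcases this with h' | h'
  · exact h'
  · exact absurd h'.symm huv

lemma Tw.adj_right {u v w : V} (h : Tw G u v) (hw : G.Adj u w) (hwv : w ≠ v) : G.Adj v w := by
  rcases (h w).1 (Or.inl hw) with h' | h'
  · exact h'
  · exact absurd h' hwv

lemma adj_transfer {u u' v v' : V} (hu : Tw G u u') (hv : Tw G v v')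
    (h : G.Adj u v) (h' : u' ≠ v') : G.Adj u' v' := by
  rcases (hu v).1 (Or.inl h) with h1 | h1
  · -- G.Adj u' v
    rcases (hv u').1 (Or.inl h1.symm) with h2 | h2
    · exact h2.symm
    · exact absurd h2 h'
  · -- v = u'
    subst h1
    exact hv.adj h'



/-- index form of closed-neighborhood membership -/
def GRep.Nbp (R : GRep G n) (i m : Fin n) : Prop := R.a m < R.b i ∧ R.a i < R.b m

lemma GRep.nbp_iff (R : GRep G n) (i m : Fin n) :
    R.Nbp i m ↔ (G.Adj (R.e i) (R.e m) ∨ m = i) := by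
  rcases eq_or_ne m i with h | h
  · subst h; simp [GRep.Nbp, R.ab_lt m]
  · rw [R.adj_iff (Ne.symm h)]
    simp [GRep.Nbp, h]

lemma GRep.tw_iff (R : GRep G n) (i j : Fin n) :
    Tw G (R.e i) (R.e j) ↔ ∀ m, (R.Nbp i m ↔ R.Nbp j m) := by
  have key : ∀ m, (R.Nbp i m ↔ (G.Adj (R.e i) (R.e m) ∨ R.e m = R.e i)) ∧
      (R.Nbp j m ↔ (G.Adj (R.e j) (R.e m) ∨ R.e m = R.e j)) := by
    intro m
    constructor
    · rw [R.nbp_iff]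
      exact or_congr Iff.rfl ⟨congrArg R.e, fun h => R.e.injective h⟩
    · rw [R.nbp_iff]
      exact or_congr Iff.rfl ⟨congrArg R.e, fun h => R.e.injective h⟩
  constructor
  · intro h m
    rw [(key m).1, (key m).2]
    exact h (R.e m)
  · intro h w
    have hw : w = R.e (R.e.symm w) := by simp
    rw [hw]
    rw [← (key (R.e.symm w)).1, ← (key (R.e.symm w)).2]
    exact h _

/-- twin classes are intervals in a canonical order -/
lemma GRep.intv (R : GRep G n) {q i j : Fin n} (h : Tw G (R.e q) (R.e j))
    (h1 : q < i) (h2 : i < j) : Tw G (R.e q) (R.e i) := by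
  rw [R.tw_iff] at h ⊢
  have hqj : R.Nbp q j := (h j).2 ⟨R.ab_lt j, R.ab_lt j⟩
  intro m
  constructor
  · rintro ⟨hm1, hm2⟩
    have hjm : R.Nbp j m := (h m).1 ⟨hm1, hm2⟩
    exact ⟨hm1.trans_le (R.hb.monotone h1.le), lt_of_le_of_lt (R.ha.monotone h2.le) hjm.2⟩
  · rintro ⟨hm1, hm2⟩
    rcases le_or_gt m j with hmj | hmj
    · exact ⟨lt_of_le_of_lt (R.ha.monotone hmj) hqj.1, (R.ha h1).trans hm2⟩
    · refine (h m).2 ⟨hm1.trans (R.hb h2), ?_⟩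
      exact (R.ha hmj).trans_le (R.hab m)


/-- the first vertex of a canonical order has its closed neighborhood contained
in that of each of its neighbors -/
lemma GRep.first_prop [NeZero n] (R : GRep G n) {v t : V}
    (hv : G.Adj (R.e 0) v) (ht : G.Adj (R.e 0) t ∨ t = R.e 0) :
    G.Adj v t ∨ t = v := by
  set k := R.e.symm v with hk
  set m := R.e.symm t with hm
  have hvk : v = R.e k := by simp [hk]
  have htm : t = R.e m := by simp [hm]
  have hk0 : k ≠ 0 := by
    intro h; rw [hvk, h] at hv; exact G.loopless.irrefl _ hv
  rw [hvk] at hv ⊢; rw [htm] at ht ⊢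
  have h1 : R.a k < R.b 0 ∧ R.a 0 < R.b k := (R.adj_iff (Ne.symm hk0)).1 hv
  rcases ht with ht | ht
  · have hm0 : m ≠ 0 := by
      intro h; rw [h] at ht; exact G.loopless.irrefl _ ht
    have h2 : R.a m < R.b 0 ∧ R.a 0 < R.b m := (R.adj_iff (Ne.symm hm0)).1 ht
    rcases eq_or_ne m k with h | h
    · exact Or.inr (congrArg R.e h)
    · refine Or.inl ((R.adj_iff (Ne.symm h)).2 ?_)
      exact ⟨h2.1.trans_le (R.hb.monotone (Fin.zero_le ..)),
        h1.1.trans_le (R.hb.monotone (Fin.zero_le ..))⟩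
  · have : m = 0 := R.e.injective ht
    rw [this]
    exact Or.inl hv.symm

/-- impossibility of the "`u` appears earlier in the second order" case in the
inductive step. -/
lemma GRep.case_lt [Fintype V] (R R' : GRep G n) {i : Fin n}
    (IH : ∀ j, j < i → Tw G (R.e j) (R'.e j))
    (hq : R'.e.symm (R.e i) < i) (hTw : ¬ Tw G (R.e i) (R'.e i)) : False := by
  classical
  set u := R.e i with hu
  set q := R'.e.symm u with hqd
  have hq' : R'.e q = u := by simp [hqd]
  -- every twin of u sits before position i in order 2
  have step1 : ∀ v : V, Tw G u v → R'.e.symm v < i := by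
    intro v hv
    set j := R'.e.symm v with hj
    have hvj : v = R'.e j := by simp [hj]
    rcases lt_trichotomy j i with h | h | h
    · exact h
    · exfalso; apply hTw; rw [← h, ← hvj]; exact hv
    · exfalso
      apply hTw
      have : Tw G (R'.e q) (R'.e j) := by rw [hq', ← hvj]; exact hv
      have := R'.intv this hq h
      rw [hq'] at this
      exact this
  set Cl : Finset V := Finset.univ.filter (fun v => Tw G u v) with hCl
  set T1 : Finset (Fin n) := (Finset.Iio i).filter (fun j => Tw G u (R.e j)) with hT1
  set T2 : Finset (Fin n) := (Finset.Iio i).filter (fun j => Tw G u (R'.e j)) with hT2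
  have hT12 : T1 = T2 := by
    apply Finset.ext
    intro j
    simp only [hT1, hT2, Finset.mem_filter, Finset.mem_Iio]
    constructor
    · rintro ⟨h1, h2⟩; exact ⟨h1, h2.trans (IH j h1)⟩
    · rintro ⟨h1, h2⟩; exact ⟨h1, h2.trans (IH j h1).symm⟩
  -- Cl = image of T2 under R'.e
  have hClT2 : Cl = T2.image R'.e := by
    apply Finset.ext
    intro v
    simp only [hCl, hT2, Finset.mem_filter, Finset.mem_image, Finset.mem_univ, true_and,
      Finset.mem_Iio]
    constructor
    · intro hv
      exact ⟨R'.e.symm v, ⟨step1 v hv, by simp [hv]⟩, by simp⟩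
    · rintro ⟨j, ⟨_, h2⟩, h3⟩
      rw [← h3]; exact h2
  have hcard2 : Cl.card = T2.card := by
    rw [hClT2, Finset.card_image_of_injective _ R'.e.injective]
  have hsub : insert u (T1.image R.e) ⊆ Cl := by
    intro v hv
    rw [Finset.mem_insert] at hv
    simp only [hCl, Finset.mem_filter, Finset.mem_univ, true_and]
    rcases hv with rfl | hv
    · exact Tw.refl u
    · simp only [Finset.mem_image, hT1, Finset.mem_filter, Finset.mem_Iio] at hv
      obtain ⟨j, ⟨_, h2⟩, h3⟩ := hv
      rw [← h3]; exact h2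
  have hnotmem : u ∉ T1.image R.e := by
    simp only [Finset.mem_image, hT1, Finset.mem_filter, Finset.mem_Iio]
    rintro ⟨j, ⟨h1, _⟩, h3⟩
    have : j = i := R.e.injective (by rw [h3])
    omega
  have hcard1 : T1.card + 1 ≤ Cl.card := by
    have := Finset.card_le_card hsub
    rwa [Finset.card_insert_of_notMem hnotmem, Finset.card_image_of_injective _ R.e.injective] at this
  rw [hT12] at hcard1
  omega


lemma GRep.wit (R R' : GRep G n) {i : Fin n}
    (IH : ∀ j, j < i → Tw G (R.e j) (R'.e j))
    (hq : i < R'.e.symm (R.e i)) (hp : i < R.e.symm (R'.e i))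
    (huu' : G.Adj (R.e i) (R'.e i))
    {t : V} (ht1 : G.Adj (R.e i) t) (ht2 : ¬(G.Adj (R'.e i) t ∨ t = R'.e i)) : False := by
  set u := R.e i with hud
  set u' := R'.e i with hud'
  set q := R'.e.symm u with hqd
  set p := R.e.symm u' with hpd
  have hq' : R'.e q = u := by simp [hqd]
  have hp' : R.e p = u' := by simp [hpd]
  have htu : t ≠ u := by
    intro h; exact ht2 (Or.inl (h ▸ huu'.symm))
  have htu' : t ≠ u' := fun h => ht2 (Or.inr h)
  set j1 := R.e.symm t with hj1
  have htj : R.e j1 = t := by simp [hj1]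
  have hj1i : j1 ≠ i := by
    intro h; apply htu; rw [← htj, h, ← hud]
  have hj1p : j1 ≠ p := by
    intro h; apply htu'; rw [← htj, h, hp']
  rcases lt_trichotomy j1 i with h | h | h
  · -- transport t to the same position in order 2
    set tt := R'.e j1 with httd
    have htt : Tw G t tt := by rw [← htj]; exact IH j1 h
    have h1 : G.Adj tt u ∨ u = tt := (htt u).1 (Or.inl ht1.symm)
    rcases h1 with h1 | h1
    · have humb := R'.umbrella (show j1 < i from h) (show i < q from hq) (by rw [hq']; exact h1)
      have : G.Adj tt u' := humb.1
      rcases (htt u').2 (Or.inl this) with h2 | h2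
      · exact ht2 (Or.inl h2.symm)
      · exact ht2 (Or.inr h2.symm)
    · have heq : q = j1 := by rw [hqd, h1, httd, Equiv.symm_apply_apply]
      rw [heq] at hq
      exact absurd (hq.trans h) (lt_irrefl i)
  · exact hj1i h
  · rcases lt_trichotomy j1 p with h2 | h2 | h2
    · have humb := R.umbrella (show i < j1 from h) h2 (by rw [hp']; exact huu')
      apply ht2
      refine Or.inl ?_
      have := humb.2
      rw [htj, hp'] at this
      exact this.symm
    · exact hj1p h2
    · have humb := R.umbrella (show i < p from hp) h2 (by rw [htj]; exact ht1)
      apply ht2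
      have := humb.2
      rw [htj, hp'] at this
      exact Or.inl this


lemma GRep.ml [Fintype V] [NeZero n] (R R' : GRep G n) (hconn : G.Connected)
    (h0 : Tw G (R.e 0) (R'.e 0)) : ∀ i, Tw G (R.e i) (R'.e i) := by
  have main : ∀ m : ℕ, ∀ i : Fin n, (i : ℕ) ≤ m → Tw G (R.e i) (R'.e i) := by
    intro m
    induction m with
    | zero =>
      intro i hi
      have : i = 0 := by
        apply Fin.ext; simpa using hi
      rw [this]; exact h0
    | succ m ih =>
      intro i hi
      rcases Nat.lt_or_ge (i : ℕ) (m + 1) with hlt | hge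
      · exact ih i (by omega)
      · have hieq : (i : ℕ) = m + 1 := by omega
        have IH : ∀ j, j < i → Tw G (R.e j) (R'.e j) := by
          intro j hj
          exact ih j (by rw [Fin.lt_def] at hj; omega)
        by_contra hTw
        set u := R.e i with hud
        set u' := R'.e i with hud'
        set q := R'.e.symm u with hqd
        set p := R.e.symm u' with hpd
        have hq' : R'.e q = u := by simp [hqd]
        have hp' : R.e p = u' := by simp [hpd]
        have hqi : q ≠ i := by
          intro h
          apply hTw
          rw [← hq', h, ← hud']
          exact Tw.refl u'
        have hpi : p ≠ i := by
          intro h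
          apply hTw
          rw [← hp', h, ← hud]
          exact Tw.refl u
        rcases lt_or_gt_of_ne hqi with hq | hq
        · exact R.case_lt R' IH hq hTw
        rcases lt_or_gt_of_ne hpi with hp | hp
        · exact R'.case_lt R (fun j hj => (IH j hj).symm) hp (fun h => hTw h.symm)
        -- main case : q > i, p > i
        have hipos : (i : ℕ) ≠ 0 := by omega
        set i0 : Fin n := ⟨(i : ℕ) - 1, by omega⟩ with hi0
        have hi01 : (i0 : ℕ) + 1 = (i : ℕ) := by simp [hi0]; omega
        have hcons : G.Adj (R'.e i0) (R'.e i) := R'.consec hconn hi01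
        have hIH0 : Tw G (R.e i0) (R'.e i0) := IH i0 (by rw [Fin.lt_def]; omega)
        have h1 : G.Adj (R.e i0) u' ∨ u' = R.e i0 := (hIH0 u').2 (Or.inl hcons)
        have huu' : G.Adj u u' := by
          rcases h1 with h1 | h1
          · have hi0i : i0 < i := by rw [Fin.lt_def]; omega
            have humb := R.umbrella hi0i (show i < p from hp) (by rw [hp']; exact h1)
            rw [← hp']
            exact humb.2
          · exfalso
            have hpe : p = i0 := by rw [hpd, h1, Equiv.symm_apply_apply]
            have hlt : (i : ℕ) < (p : ℕ) := hp
            rw [hpe] at hlt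
            simp only [hi0] at hlt
            omega
        -- extract a distinguishing witness
        have hwitness : ∃ t, ¬((G.Adj u t ∨ t = u) ↔ (G.Adj u' t ∨ t = u')) := by
          by_contra hc
          push_neg at hc
          exact hTw (fun w => hc w)
        obtain ⟨t, ht⟩ := hwitness
        by_cases h1 : G.Adj u t ∨ t = u
        · by_cases h2 : G.Adj u' t ∨ t = u'
          · exact ht (iff_of_true h1 h2)
          · rcases h1 with h1 | h1
            · exact R.wit R' IH hq hp huu' h1 h2
            · exact h2 (Or.inl (h1 ▸ huu'.symm))
        · by_cases h2 : G.Adj u' t ∨ t = u'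
          · rcases h2 with h2 | h2
            · exact R'.wit R (fun j hj => (IH j hj).symm) hp hq huu'.symm h2 h1
            · exact h1 (Or.inl (h2 ▸ huu'))
          · exact ht (iff_of_false h1 h2)
  intro i
  exact main (i : ℕ) i le_rfl


set_option maxHeartbeats 1000000 in
lemma GRep.extremal [Fintype V] [NeZero n] (R R' : GRep G n) (hconn : G.Connected) :
    Tw G (R.e 0) (R'.e 0) ∨ Tw G (R.e 0) (R'.e (Fin.rev 0)) := by
  classical
  by_contra hcon
  push_neg at hcon
  obtain ⟨hc1, hc2⟩ := hcon
  set u' := R.e 0 with hu'd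
  set Ty : Finset (Fin n) := Finset.univ.filter (fun k => Tw G u' (R'.e k)) with hTyd
  have hp'mem : R'.e.symm u' ∈ Ty := by
    simp only [hTyd, Finset.mem_filter, Finset.mem_univ, true_and]
    rw [Equiv.apply_symm_apply]
    exact Tw.refl u'
  have hTyne : Ty.Nonempty := ⟨_, hp'mem⟩
  set p' := R'.e.symm u' with hp'd
  set y := Ty.min' hTyne with hyd
  set z := Ty.max' hTyne with hzd
  have hymem : y ∈ Ty := Ty.min'_mem hTyne
  have hzmem : z ∈ Ty := Ty.max'_mem hTyne
  have hty : Tw G u' (R'.e y) := by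
    simpa [hTyd, Finset.mem_filter] using hymem
  have htz : Tw G u' (R'.e z) := by
    simpa [hTyd, Finset.mem_filter] using hzmem
  have hyp' : y ≤ p' := Ty.min'_le _ hp'mem
  have hp'z : p' ≤ z := Ty.le_max' _ hp'mem
  have hy0 : y ≠ 0 := by
    intro h; exact hc1 (h ▸ hty)
  have hzlast : (z : ℕ) < n - 1 := by
    have hzn : (z : ℕ) < n := z.isLt
    rcases Nat.lt_or_ge (z : ℕ) (n - 1) with h | h
    · exact h
    · exfalso
      have : z = Fin.rev 0 := by
        apply Fin.ext
        rw [Fin.val_rev]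
        simp only [Fin.val_zero]
        omega
      exact hc2 (this ▸ htz)
  have hy1 : 1 ≤ (y : ℕ) := by
    rcases Nat.eq_zero_or_pos (y : ℕ) with h | h
    · exact absurd (Fin.ext (by simpa using h)) hy0
    · exact h
  set ym : Fin n := ⟨(y : ℕ) - 1, by omega⟩ with hymd
  set zp : Fin n := ⟨(z : ℕ) + 1, by omega⟩ with hzpd
  set x := R'.e ym with hxd
  set w := R'.e zp with hwd
  -- x is adjacent to u' but not its twin
  have hconsx : G.Adj (R'.e ym) (R'.e y) := R'.consec hconn (by simp [hymd]; omega)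
  have hux : G.Adj u' x := by
    rcases (hty x).2 (Or.inl hconsx.symm) with h | h
    · exact h
    · exfalso
      have : p' = ym := by rw [hp'd, ← h, hxd, Equiv.symm_apply_apply]
      have h2 : (y : ℕ) ≤ (p' : ℕ) := hyp'
      rw [this] at h2
      simp only [hymd] at h2
      omega
  have hnx : ¬ Tw G u' x := by
    intro h
    have : ym ∈ Ty := by simp [hTyd, Finset.mem_filter, ← hxd, h]
    have := Ty.min'_le _ this
    rw [← hyd] at this
    have h2 : (y : ℕ) ≤ (ym : ℕ) := this
    simp only [hymd] at h2
    omega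
  have hconsw : G.Adj (R'.e z) (R'.e zp) := R'.consec hconn (by simp [hzpd])
  have huw : G.Adj u' w := by
    rcases (htz w).2 (Or.inl hconsw) with h | h
    · exact h
    · exfalso
      have : p' = zp := by rw [hp'd, ← h, hwd, Equiv.symm_apply_apply]
      have h2 : (p' : ℕ) ≤ (z : ℕ) := hp'z
      rw [this] at h2
      simp only [hzpd] at h2
      omega
  have hnw : ¬ Tw G u' w := by
    intro h
    have : zp ∈ Ty := by simp [hTyd, Finset.mem_filter, ← hwd, h]
    have := Ty.le_max' _ this
    rw [← hzd] at this
    have h2 : (zp : ℕ) ≤ (z : ℕ) := this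
    simp only [hzpd] at h2
    omega
  -- distinguishing witnesses
  have getwit : ∀ v : V, G.Adj u' v → ¬ Tw G u' v →
      ∃ s, G.Adj v s ∧ ¬(G.Adj u' s ∨ s = u') := by
    intro v hv hnv
    have : ∃ s, ¬((G.Adj u' s ∨ s = u') ↔ (G.Adj v s ∨ s = v)) := by
      by_contra hcc
      push_neg at hcc
      exact hnv (fun s => hcc s)
    obtain ⟨s, hs⟩ := this
    by_cases h1 : G.Adj u' s ∨ s = u'
    · exfalso
      exact hs (iff_of_true h1 (R.first_prop hv h1))
    · by_cases h2 : G.Adj v s ∨ s = v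
      · rcases h2 with h2 | h2
        · exact ⟨s, h2, h1⟩
        · exfalso
          exact h1 (Or.inl (h2 ▸ hv))
      · exact absurd (hs (iff_of_false h1 h2)) not_false
  obtain ⟨s, hxs, hsu⟩ := getwit x hux hnx
  obtain ⟨s', hws', hs'u⟩ := getwit w huw hnw
  -- positions of s, s' in the second order
  set js := R'.e.symm s with hjsd
  set js' := R'.e.symm s' with hjs'd
  have hjse : R'.e js = s := by simp [hjsd]
  have hjs'e : R'.e js' = s' := by simp [hjs'd]
  have hjsp : js ≠ p' := by
    intro h
    apply hsu
    rw [← hjse, h, hp'd, Equiv.apply_symm_apply]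
    exact Or.inr rfl
  have hjs'p : js' ≠ p' := by
    intro h
    apply hs'u
    rw [← hjs'e, h, hp'd, Equiv.apply_symm_apply]
    exact Or.inr rfl
  have hp'e : R'.e p' = u' := by simp [hp'd]
  have hymp' : ym < p' := by
    rw [Fin.lt_def]
    have : (y : ℕ) ≤ (p' : ℕ) := hyp'
    simp only [hymd]
    omega
  have hp'zp : p' < zp := by
    rw [Fin.lt_def]
    have : (p' : ℕ) ≤ (z : ℕ) := hp'z
    simp only [hzpd]
    omega
  have hjslt : js < p' := by
    rcases lt_trichotomy js p' with h | h | h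
    · exact h
    · exact absurd h hjsp
    · exfalso
      have humb := R'.umbrella hymp' h (by rw [hjse]; exact hxs)
      apply hsu
      refine Or.inl ?_
      have := humb.2
      rw [hjse, hp'e] at this
      exact this
  have hnsw : ¬ G.Adj s w := by
    intro hsw
    have humb := R'.umbrella hjslt hp'zp (by rw [hjse]; exact hsw)
    apply hsu
    refine Or.inl ?_
    have := humb.1
    rw [hjse, hp'e] at this
    exact this.symm
  have hjs'gt : p' < js' := by
    rcases lt_trichotomy js' p' with h | h | h
    · exfalso
      have humb := R'.umbrella h hp'zp (by rw [hjs'e]; exact hws'.symm)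
      apply hs'u
      refine Or.inl ?_
      have := humb.1
      rw [hjs'e, hp'e] at this
      exact this.symm
    · exact absurd h hjs'p
    · exact h
  have hnsx : ¬ G.Adj s' x := by
    intro hsx
    have humb := R'.umbrella hymp' hjs'gt (by rw [hjs'e]; exact hsx.symm)
    apply hs'u
    refine Or.inl ?_
    have := humb.2
    rw [hjs'e, hp'e] at this
    exact this
  -- now pass to the first order, where u' is the first vertex
  set px := R.e.symm x with hpxd
  set pw := R.e.symm w with hpwd
  set ps := R.e.symm s with hpsd
  set ps' := R.e.symm s' with hps'd
  have hpxe : R.e px = x := by simp [hpxd]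
  have hpwe : R.e pw = w := by simp [hpwd]
  have hpse : R.e ps = s := by simp [hpsd]
  have hps'e : R.e ps' = s' := by simp [hps'd]
  have hne0 : ∀ v : V, G.Adj u' v → R.e.symm v ≠ 0 := by
    intro v hv h
    have : v = u' := by
      rw [← Equiv.apply_symm_apply R.e v, h, ← hu'd]
    rw [this] at hv
    exact G.loopless.irrefl _ hv
  have hpx0 : px ≠ 0 := hne0 x hux
  have hpw0 : pw ≠ 0 := hne0 w huw
  have hadjx : R.a px < R.b 0 ∧ R.a 0 < R.b px := by
    have := hux
    rw [hu'd, ← hpxe] at this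
    exact (R.adj_iff (Ne.symm hpx0)).1 this
  have hadjw : R.a pw < R.b 0 ∧ R.a 0 < R.b pw := by
    have := huw
    rw [hu'd, ← hpwe] at this
    exact (R.adj_iff (Ne.symm hpw0)).1 this
  have hfar : ∀ v : V, ¬(G.Adj u' v ∨ v = u') → R.b 0 < R.a (R.e.symm v) := by
    intro v hv
    have hv0 : R.e.symm v ≠ 0 := by
      intro h
      apply hv
      refine Or.inr ?_
      rw [← Equiv.apply_symm_apply R.e v, h, ← hu'd]
    have hnadj : ¬ G.Adj (R.e 0) (R.e (R.e.symm v)) := by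
      rw [Equiv.apply_symm_apply, ← hu'd]
      intro h
      exact hv (Or.inl h)
    rw [R.adj_iff (Ne.symm hv0)] at hnadj
    push_neg at hnadj
    have h2 : R.a 0 < R.b (R.e.symm v) := by
      have : R.a 0 < R.a (R.e.symm v) := R.ha ((Fin.zero_le _).lt_of_ne (Ne.symm hv0))
      exact this.trans_le (R.hab _)
    have h3 : ¬ R.a (R.e.symm v) < R.b 0 := fun h => absurd h2 (not_lt.2 (hnadj h))
    exact lt_of_le_of_ne (not_lt.1 h3) (R.hne (R.e.symm v) 0).symm
  have hbs : R.b 0 < R.a ps := hfar s hsu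
  have hbs' : R.b 0 < R.a ps' := hfar s' hs'u
  have hpxps : px < ps := R.ha.lt_iff_lt.1 (hadjx.1.trans hbs)
  have hpwps : pw < ps := R.ha.lt_iff_lt.1 (hadjw.1.trans hbs)
  have hpxps' : px < ps' := R.ha.lt_iff_lt.1 (hadjx.1.trans hbs')
  have hpwps' : pw < ps' := R.ha.lt_iff_lt.1 (hadjw.1.trans hbs')
  have hxw : px ≠ pw := by
    intro h
    have hx2 : x = w := by rw [← hpxe, ← hpwe, h]
    have h2 : ym = zp := R'.e.injective (by rw [← hxd, ← hwd]; exact hx2)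
    have h3 := congrArg Fin.val h2
    simp only [hymd, hzpd] at h3
    have hc1' : (y : ℕ) ≤ (p' : ℕ) := hyp'
    have hc2' : (p' : ℕ) ≤ (z : ℕ) := hp'z
    omega
  rcases lt_or_gt_of_ne hxw with h | h
  · have humb := R.umbrella h hpwps (by rw [hpxe, hpse]; exact hxs)
    apply hnsw
    have := humb.2
    rw [hpwe, hpse] at this
    exact this.symm
  · have humb := R.umbrella h hpxps' (by rw [hpwe, hps'e]; exact hws')
    apply hnsx
    have := humb.2
    rw [hpxe, hps'e] at this
    exact this.symm


/-- uniqueness of the canonical sequence given identical comparison matrices -/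
lemma canon_seq_unique {n : ℕ} {a b a' b' : Fin n → ℝ}
    (ha : StrictMono a) (hb : StrictMono b)
    (hne : ∀ i j, a i ≠ b j)
    (ha' : StrictMono a') (hb' : StrictMono b')
    (hne' : ∀ i j, a' i ≠ b' j)
    (hC : ∀ i j : Fin n, a j < b i ↔ a' j < b' i)
    {S S' : Fin (2 * n) → Fin n} (hS : IsCanonSeq a b S) (hS' : IsCanonSeq a' b' S') :
    ∀ k, S' k = S k := by
  classical
  obtain ⟨val, hmono, hrange, hpt⟩ := hS
  obtain ⟨val', hmono', hrange', hpt'⟩ := hS'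
  have hD : ∀ i j : Fin n, b j < a i ↔ b' j < a' i := by
    intro i j
    constructor
    · intro h
      rcases lt_trichotomy (b' j) (a' i) with h3 | h3 | h3
      · exact h3
      · exact absurd h3.symm (hne' i j)
      · exact absurd ((hC j i).2 h3) (not_lt.2 h.le)
    · intro h
      rcases lt_trichotomy (b j) (a i) with h3 | h3 | h3
      · exact h3
      · exact absurd h3.symm (hne i j)
      · exact absurd ((hC j i).1 h3) (not_lt.2 h.le)
  set rk : ℝ → ℕ := fun c => (Finset.univ.filter (fun j => a j < c)).card +
    (Finset.univ.filter (fun j => b j < c)).card with hrkd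
  set rk' : ℝ → ℕ := fun c => (Finset.univ.filter (fun j => a' j < c)).card +
    (Finset.univ.filter (fun j => b' j < c)).card with hrk'd
  -- generic facts, proved for an arbitrary canonical representation
  have key : ∀ (A B : Fin n → ℝ), StrictMono A → StrictMono B → (∀ i j, A i ≠ B j) →
      ∀ (W : Fin (2 * n) → ℝ), StrictMono W → Set.range W = Set.range A ∪ Set.range B →
      ∀ k : Fin (2 * n), (k : ℕ) = (Finset.univ.filter (fun j => A j < W k)).card +
        (Finset.univ.filter (fun j => B j < W k)).card := by
    intro A B hA hB hAB W hW hr k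
    set U : Finset ℝ := Finset.univ.image W with hUd
    have hU : U = (Finset.univ.image A) ∪ (Finset.univ.image B) := by
      apply Finset.coe_injective
      simp only [hUd, Finset.coe_image, Finset.coe_union, Finset.coe_univ, Set.image_univ]
      exact hr
    have hdisj : Disjoint ((Finset.univ.image A).filter (· < W k))
        ((Finset.univ.image B).filter (· < W k)) := by
      rw [Finset.disjoint_left]
      intro x hx1 hx2
      simp only [Finset.mem_filter, Finset.mem_image, Finset.mem_univ, true_and] at hx1 hx2
      obtain ⟨⟨i, hi⟩, -⟩ := hx1
      obtain ⟨⟨j, hj⟩, -⟩ := hx2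
      exact hAB i j (hi.trans hj.symm)
    have h1 : (U.filter (· < W k)).card = (Finset.univ.filter (fun j => A j < W k)).card +
        (Finset.univ.filter (fun j => B j < W k)).card := by
      rw [hU, Finset.filter_union, Finset.card_union_of_disjoint hdisj,
        Finset.filter_image, Finset.filter_image,
        Finset.card_image_of_injective _ hA.injective,
        Finset.card_image_of_injective _ hB.injective]
    have h2 : (U.filter (· < W k)).card = (k : ℕ) := by
      rw [hUd, Finset.filter_image, Finset.card_image_of_injective _ hW.injective]
      have : (Finset.univ.filter (fun t => W t < W k)) = Finset.Iio k := by
        ext t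
        simp [hW.lt_iff_lt]
      rw [this]
      simp
    omega
  have K1 : ∀ k : Fin (2 * n), (k : ℕ) = rk (val k) := key a b ha hb hne val hmono hrange
  have K1' : ∀ k : Fin (2 * n), (k : ℕ) = rk' (val' k) := key a' b' ha' hb' hne' val' hmono' hrange'
  -- rank is injective on the union of the ranges
  have K2 : ∀ c d : ℝ, c ∈ Set.range a ∪ Set.range b → d ∈ Set.range a ∪ Set.range b →
      rk c = rk d → c = d := by
    have mono : ∀ c d : ℝ, c < d → c ∈ Set.range a ∪ Set.range b → rk c < rk d := by
      intro c d hcd hc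
      have hsub : ∀ (f : Fin n → ℝ), (Finset.univ.filter (fun j => f j < c)) ⊆
          (Finset.univ.filter (fun j => f j < d)) := by
        intro f j hj
        simp only [Finset.mem_filter, Finset.mem_univ, true_and] at hj ⊢
        exact hj.trans hcd
      rcases hc with ⟨i, hi⟩ | ⟨i, hi⟩
      · have : (Finset.univ.filter (fun j => a j < c)) ⊂ (Finset.univ.filter (fun j => a j < d)) := by
          refine ⟨hsub a, fun hcon => ?_⟩
          have : i ∈ Finset.univ.filter (fun j => a j < c) := by
            apply hcon
            simp only [Finset.mem_filter, Finset.mem_univ, true_and]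
            rw [hi]; exact hcd
          simp only [Finset.mem_filter, Finset.mem_univ, true_and] at this
          rw [hi] at this
          exact lt_irrefl c this
        have h1 := Finset.card_lt_card this
        have h2 := Finset.card_le_card (hsub b)
        simp only [hrkd]
        omega
      · have : (Finset.univ.filter (fun j => b j < c)) ⊂ (Finset.univ.filter (fun j => b j < d)) := by
          refine ⟨hsub b, fun hcon => ?_⟩
          have : i ∈ Finset.univ.filter (fun j => b j < c) := by
            apply hcon
            simp only [Finset.mem_filter, Finset.mem_univ, true_and]
            rw [hi]; exact hcd
          simp only [Finset.mem_filter, Finset.mem_univ, true_and] at this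
          rw [hi] at this
          exact lt_irrefl c this
        have h1 := Finset.card_lt_card this
        have h2 := Finset.card_le_card (hsub a)
        simp only [hrkd]
        omega
    intro c d hc hd hcd
    rcases lt_trichotomy c d with h | h | h
    · exact absurd hcd (Nat.ne_of_lt (mono c d h hc))
    · exact h
    · exact absurd hcd.symm (Nat.ne_of_lt (mono d c h hd))
  -- counting positions below a given endpoint agrees between the two representations
  have K3a : ∀ m, rk' (a' m) = rk (a m) := by
    intro m
    simp only [hrkd, hrk'd]
    congr 1
    · apply congrArg
      apply Finset.filter_congr
      intro j _
      try simp only [eq_iff_iff]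
      rw [ha'.lt_iff_lt, ha.lt_iff_lt]
    · apply congrArg
      apply Finset.filter_congr
      intro j _
      try simp only [eq_iff_iff]
      exact (hD m j).symm
  have K3b : ∀ m, rk' (b' m) = rk (b m) := by
    intro m
    simp only [hrkd, hrk'd]
    congr 1
    · apply congrArg
      apply Finset.filter_congr
      intro j _
      try simp only [eq_iff_iff]
      exact (hC m j).symm
    · apply congrArg
      apply Finset.filter_congr
      intro j _
      try simp only [eq_iff_iff]
      rw [hb'.lt_iff_lt, hb.lt_iff_lt]
  intro k
  have e1 := hpt k
  have e2 := hpt' k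
  rcases e1 with e1 | e1 <;> rcases e2 with e2 | e2
  · -- a, a'
    have h1 : rk (a (S k)) = rk (a (S' k)) := by
      rw [e1, ← K1 k, ← K3a, e2, ← K1' k]
    have := K2 _ _ (Or.inl ⟨S k, rfl⟩) (Or.inl ⟨S' k, rfl⟩) h1
    exact (ha.injective this).symm
  · -- a, b'
    exfalso
    have h1 : rk (a (S k)) = rk (b (S' k)) := by
      rw [e1, ← K1 k, ← K3b, e2, ← K1' k]
    have := K2 _ _ (Or.inl ⟨S k, rfl⟩) (Or.inr ⟨S' k, rfl⟩) h1
    exact hne (S k) (S' k) this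
  · -- b, a'
    exfalso
    have h1 : rk (b (S k)) = rk (a (S' k)) := by
      rw [e1, ← K1 k, ← K3a, e2, ← K1' k]
    have := K2 _ _ (Or.inr ⟨S k, rfl⟩) (Or.inl ⟨S' k, rfl⟩) h1
    exact hne (S' k) (S k) this.symm
  · -- b, b'
    have h1 : rk (b (S k)) = rk (b (S' k)) := by
      rw [e1, ← K1 k, ← K3b, e2, ← K1' k]
    have := K2 _ _ (Or.inr ⟨S k, rfl⟩) (Or.inr ⟨S' k, rfl⟩) h1
    exact (hb.injective this).symm


lemma GRep.matrix_eq (R R' : GRep G n) (htw : ∀ i, Tw G (R.e i) (R'.e i)) :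
    ∀ i j, R.a j < R.b i ↔ R'.a j < R'.b i := by
  intro i j
  rcases lt_trichotomy i j with hij | hij | hij
  · have h1 : R.a j < R.b i ↔ G.Adj (R.e i) (R.e j) := by
      rw [R.adj_iff hij.ne]
      exact ⟨fun h => ⟨h, (R.ha hij).trans_le (R.hab j)⟩, fun h => h.1⟩
    have h2 : R'.a j < R'.b i ↔ G.Adj (R'.e i) (R'.e j) := by
      rw [R'.adj_iff hij.ne]
      exact ⟨fun h => ⟨h, (R'.ha hij).trans_le (R'.hab j)⟩, fun h => h.1⟩
    rw [h1, h2]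
    constructor
    · intro h
      exact adj_transfer (htw i) (htw j) h (fun hh => hij.ne (R'.e.injective hh))
    · intro h
      exact adj_transfer (htw i).symm (htw j).symm h (fun hh => hij.ne (R.e.injective hh))
  · rw [hij]
    exact iff_of_true (R.ab_lt j) (R'.ab_lt j)
  · exact iff_of_true ((R.ha hij).trans_le (R.hab i)) ((R'.ha hij).trans_le (R'.hab i))

/-- the reversal of a canonical representation -/
def GRep.rev (R : GRep G n) : GRep G n where
  e := Fin.revPerm.trans R.e
  a := fun i => -R.b i.rev
  b := fun i => -R.a i.rev
  hab := fun i => neg_le_neg (R.hab i.rev)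
  ha := fun i j hij => neg_lt_neg (R.hb (Fin.rev_lt_rev.2 hij))
  hb := fun i j hij => neg_lt_neg (R.ha (Fin.rev_lt_rev.2 hij))
  hne := fun i j h => R.hne j.rev i.rev (neg_injective h).symm
  hAdj := by
    intro i j hij
    have hij' : i.rev ≠ j.rev := fun h => hij (by
      have := congrArg Fin.rev h
      rwa [Fin.rev_rev, Fin.rev_rev] at this)
    have : G.Adj ((Fin.revPerm.trans R.e) i) ((Fin.revPerm.trans R.e) j)
        ↔ G.Adj (R.e i.rev) (R.e j.rev) := Iff.rfl
    rw [this, R.hAdj _ _ hij']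
    constructor
    · rintro ⟨x, ⟨h1, h2⟩, ⟨h3, h4⟩⟩
      refine ⟨-x, ⟨show -R.b i.rev ≤ -x by linarith, show -x ≤ -R.a i.rev by linarith⟩,
        ⟨show -R.b j.rev ≤ -x by linarith, show -x ≤ -R.a j.rev by linarith⟩⟩
    · rintro ⟨x, ⟨h1, h2⟩, ⟨h3, h4⟩⟩
      have h1' : -R.b i.rev ≤ x := h1
      have h2' : x ≤ -R.a i.rev := h2
      have h3' : -R.b j.rev ≤ x := h3
      have h4' : x ≤ -R.a j.rev := h4
      exact ⟨-x, ⟨by linarith, by linarith⟩, ⟨by linarith, by linarith⟩⟩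

lemma isCanonSeq_rev {n : ℕ} {a b : Fin n → ℝ} {S : Fin (2 * n) → Fin n}
    (h : IsCanonSeq a b S) :
    IsCanonSeq (fun i => -b i.rev) (fun i => -a i.rev) (fun k => (S k.rev).rev) := by
  obtain ⟨val, hmono, hrange, hpt⟩ := h
  refine ⟨fun k => -val k.rev, ?_, ?_, ?_⟩
  · intro k l hkl
    exact neg_lt_neg (hmono (Fin.rev_lt_rev.2 hkl))
  · have h1 : Set.range (fun k : Fin (2 * n) => -val k.rev) = Neg.neg '' Set.range val := by
      ext x
      constructor
      · rintro ⟨k, rfl⟩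
        exact ⟨val k.rev, ⟨k.rev, rfl⟩, rfl⟩
      · rintro ⟨y, ⟨k, rfl⟩, rfl⟩
        exact ⟨k.rev, by simp⟩
    have h2 : Set.range (fun i : Fin n => -b i.rev) = Neg.neg '' Set.range b := by
      ext x
      constructor
      · rintro ⟨k, rfl⟩
        exact ⟨b k.rev, ⟨k.rev, rfl⟩, rfl⟩
      · rintro ⟨y, ⟨k, rfl⟩, rfl⟩
        exact ⟨k.rev, by simp⟩
    have h3 : Set.range (fun i : Fin n => -a i.rev) = Neg.neg '' Set.range a := by
      ext x
      constructor
      · rintro ⟨k, rfl⟩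
        exact ⟨a k.rev, ⟨k.rev, rfl⟩, rfl⟩
      · rintro ⟨y, ⟨k, rfl⟩, rfl⟩
        exact ⟨k.rev, by simp⟩
    rw [h1, h2, h3, hrange, Set.image_union]
    exact Set.union_comm _ _
  · intro k
    have := hpt k.rev
    rcases this with h1 | h1
    · right
      simp only [Fin.rev_rev]
      rw [h1]
    · left
      simp only [Fin.rev_rev]
      rw [h1]

end Stmt3Aux

/-- for a connected graph `G` admitting a canonical representation, the
canonical sequence is unique up to reversal: any two canonical representations
(each given by an enumeration and intervals) have canonical sequences `S`, `S'`
with either `S' = S` or `S' k = (S k.rev).rev` for all `k`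
(1-based: `S'(k) = n + 1 − S(2n + 1 − k)`). -/
theorem stmt3 {V : Type*} [Fintype V] {n : ℕ} (G : SimpleGraph V)
    (hconn : G.Connected)
    (e : Fin n ≃ V) (a b : Fin n → ℝ)
    (hab : ∀ i, a i ≤ b i) (ha : StrictMono a) (hb : StrictMono b)
    (hne : ∀ i j : Fin n, a i ≠ b j)
    (hAdj : ∀ i j : Fin n, i ≠ j →
      (G.Adj (e i) (e j) ↔ (Icc (a i) (b i) ∩ Icc (a j) (b j)).Nonempty))
    (e' : Fin n ≃ V) (a' b' : Fin n → ℝ)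
    (hab' : ∀ i, a' i ≤ b' i) (ha' : StrictMono a') (hb' : StrictMono b')
    (hne' : ∀ i j : Fin n, a' i ≠ b' j)
    (hAdj' : ∀ i j : Fin n, i ≠ j →
      (G.Adj (e' i) (e' j) ↔ (Icc (a' i) (b' i) ∩ Icc (a' j) (b' j)).Nonempty))
    (S S' : Fin (2 * n) → Fin n)
    (hS : IsCanonSeq a b S) (hS' : IsCanonSeq a' b' S') :
    (∀ k, S' k = S k) ∨ (∀ k, S' k = (S k.rev).rev) := by
  classical
  rcases Nat.eq_zero_or_pos n with hn | hn
  · left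
    intro k
    exact absurd k.isLt (by omega)
  haveI : NeZero n := ⟨by omega⟩
  set R : Stmt3Aux.GRep G n := ⟨e, a, b, hab, ha, hb, hne, hAdj⟩ with hR
  set R' : Stmt3Aux.GRep G n := ⟨e', a', b', hab', ha', hb', hne', hAdj'⟩ with hR'
  rcases Stmt3Aux.GRep.extremal R R' hconn with h0 | h0
  · left
    have htw := Stmt3Aux.GRep.ml R R' hconn h0
    have hC := Stmt3Aux.GRep.matrix_eq R R' htw
    exact Stmt3Aux.canon_seq_unique ha hb hne ha' hb' hne' hC hS hS'
  · right
    have h0' : Stmt3Aux.Tw G (R.e 0) ((Stmt3Aux.GRep.rev R').e 0) := h0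
    have htw := Stmt3Aux.GRep.ml R (Stmt3Aux.GRep.rev R') hconn h0'
    have hC := Stmt3Aux.GRep.matrix_eq R _ htw
    have hS'' := Stmt3Aux.isCanonSeq_rev hS'
    have hfin := Stmt3Aux.canon_seq_unique ha hb hne ((Stmt3Aux.GRep.rev R').ha)
      ((Stmt3Aux.GRep.rev R').hb) ((Stmt3Aux.GRep.rev R').hne) hC hS hS''
    intro k
    have hk := hfin k.rev
    simp only [Fin.rev_rev] at hk
    rw [← hk, Fin.rev_rev]
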